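/- arXiv:1407.1383 — 2 statements merged into one kernel-verified Lean document; each statement's English description precedes it below -/
import Mathlib

section
/- Let Z have cdf F(z) = 1 − (1+K)/(zρ + K + 1) · exp(−K + K(1+K)/(ρ z + K + 1)) for z ≥ 0, where ρ = γ̄_sp/γ̄_s > 0 and K ≥ 0. Then lim_{z→∞} z f(z)/(1 − F(z)) = 1, where f = F′. -/
open Real Filter

/-- Let `Z` have cdf `F(z) = 1 - (1+K)/(zρ+K+1) · exp(-K + K(1+K)/(ρz+K+1))` for `z ≥ 0`,
where `ρ > 0` and `K ≥ 0`. Then `z f(z)/(1 - F(z)) → 1` as `z → ∞`, where `f = F'`. -/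
theorem stmt_8 (K ρ : ℝ) (hK : 0 ≤ K) (hρ : 0 < ρ)
    (F : ℝ → ℝ)
    (hF : ∀ z ≥ (0 : ℝ),
      F z = 1 - (1 + K) / (z * ρ + K + 1) * Real.exp (-K + K * (1 + K) / (ρ * z + K + 1))) :
    Tendsto (fun z => z * deriv F z / (1 - F z)) atTop (nhds 1) := by
  have hK1 : (0:ℝ) < 1 + K := by linarith
  -- the target limit function
  set h : ℝ → ℝ := fun z =>
    (1 - (K + 1) / (ρ * z + K + 1)) * (1 + K * (1 + K) / (ρ * z + K + 1)) with hh
  have hu : Tendsto (fun z => ρ * z + K + 1) atTop atTop := by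
    apply tendsto_atTop_add_const_right
    apply tendsto_atTop_add_const_right
    exact (tendsto_id.const_mul_atTop hρ)
  have hinv : Tendsto (fun z => (ρ * z + K + 1)⁻¹) atTop (nhds 0) :=
    hu.inv_tendsto_atTop
  have hlim : Tendsto h atTop (nhds 1) := by
    have h1 : Tendsto (fun z => 1 - (K + 1) / (ρ * z + K + 1)) atTop (nhds (1 - (K+1) * 0)) := by
      apply tendsto_const_nhds.sub
      simpa [div_eq_mul_inv] using hinv.const_mul (K+1)
    have h2 : Tendsto (fun z => 1 + K * (1 + K) / (ρ * z + K + 1)) atTop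
        (nhds (1 + K * (1+K) * 0)) := by
      apply tendsto_const_nhds.add
      simpa [div_eq_mul_inv] using hinv.const_mul (K * (1+K))
    have := h1.mul h2
    simpa using this
  refine hlim.congr' ?_
  filter_upwards [eventually_ge_atTop (1:ℝ)] with z hz
  have hz0 : (0:ℝ) < z := by linarith
  have hupos : (0:ℝ) < z * ρ + K + 1 := by positivity
  have hune : z * ρ + K + 1 ≠ 0 := ne_of_gt hupos
  have hupos' : (0:ℝ) < ρ * z + K + 1 := by positivity
  have hune' : ρ * z + K + 1 ≠ 0 := ne_of_gt hupos'
  -- derivative computation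
  have hderivu : HasDerivAt (fun z : ℝ => z * ρ + K + 1) ρ z := by
    simpa using (((hasDerivAt_id z).mul_const ρ).add_const K).add_const 1
  have hderivu' : HasDerivAt (fun z : ℝ => ρ * z + K + 1) ρ z := by
    simpa using (((hasDerivAt_id z).const_mul ρ).add_const K).add_const 1
  have hA : HasDerivAt (fun z : ℝ => (1 + K) / (z * ρ + K + 1))
      ((0 * (z * ρ + K + 1) - (1 + K) * ρ) / (z * ρ + K + 1) ^ 2) z :=
    (hasDerivAt_const z (1+K)).div hderivu hune
  have hg : HasDerivAt (fun z : ℝ => -K + K * (1 + K) / (ρ * z + K + 1))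
      (0 + (0 * (ρ * z + K + 1) - K * (1 + K) * ρ) / (ρ * z + K + 1) ^ 2) z :=
    (hasDerivAt_const z (-K)).add ((hasDerivAt_const z (K*(1+K))).div hderivu' hune')
  have hB := hg.exp
  have hAB := hA.mul hB
  have hFz : HasDerivAt F
      (-(((0 * (z * ρ + K + 1) - (1 + K) * ρ) / (z * ρ + K + 1) ^ 2) *
          Real.exp (-K + K * (1 + K) / (ρ * z + K + 1)) +
        (1 + K) / (z * ρ + K + 1) *
          (Real.exp (-K + K * (1 + K) / (ρ * z + K + 1)) *
            (0 + (0 * (ρ * z + K + 1) - K * (1 + K) * ρ) / (ρ * z + K + 1) ^ 2)))) z := by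
    have heq : F =ᶠ[nhds z] fun z =>
        1 - (1 + K) / (z * ρ + K + 1) * Real.exp (-K + K * (1 + K) / (ρ * z + K + 1)) := by
      filter_upwards [Ioi_mem_nhds hz0] with x hx
      exact hF x (le_of_lt hx)
    exact (hAB.const_sub 1).congr_of_eventuallyEq heq
  rw [hFz.deriv, hF z (le_of_lt hz0)]
  have hexp : Real.exp (-K + K * (1 + K) / (ρ * z + K + 1)) ≠ 0 := Real.exp_ne_zero _
  have hcomm : z * ρ + K + 1 = ρ * z + K + 1 := by ring
  rw [hh]
  field_simp [hcomm]
  ring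
end

section
/- Let F(z) = 1 − (1+K)/(zρ + K + 1) · exp(−K + K(1+K)/(ρ z + K + 1)) with ρ = γ̄_sp/γ̄_s. The solution a_N of F(a_N) = 1 − 1/N is a_N = (K² + K)/(ρ · W(K e^K / N)) − (K+1)/ρ, where W is the principal Lambert W function. -/
open Real

lemma texp_inj {u w : ℝ} (hu : 0 < u) (hw : 0 < w)
    (h : u * Real.exp u = w * Real.exp w) : u = w := by
  rcases lt_trichotomy u w with hlt | heq | hgt
  · exfalso
    have : u * Real.exp u < w * Real.exp w :=
      mul_lt_mul hlt (Real.exp_le_exp.mpr hlt.le) (Real.exp_pos u) hw.le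
    linarith
  · exact heq
  · exfalso
    have : w * Real.exp w < u * Real.exp u :=
      mul_lt_mul hgt (Real.exp_le_exp.mpr hgt.le) (Real.exp_pos w) hu.le
    linarith

/-- With `F(z) = 1 - (1+K)/(zρ+K+1)·exp(-K + K(1+K)/(ρz+K+1))`, the solution `a_N` of
`F(a_N) = 1 - 1/N` is `a_N = (K²+K)/(ρ W(K e^K/N)) - (K+1)/ρ`, where `W` is the principal
Lambert W function (characterized by `W(x) e^{W(x)} = x` and `W(x) ≥ 0` for `x ≥ 0`). -/
theorem stmt_9 (K ρ : ℝ) (hK : 0 < K) (hρ : 0 < ρ)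
    (W : ℝ → ℝ)
    (hW : ∀ x ≥ (0 : ℝ), W x * Real.exp (W x) = x)
    (hWnonneg : ∀ x ≥ (0 : ℝ), 0 ≤ W x)
    (N : ℕ) (hN : 1 ≤ N)
    (aN : ℝ)
    (haN : 1 - (1 + K) / (aN * ρ + K + 1) * Real.exp (-K + K * (1 + K) / (ρ * aN + K + 1))
      = 1 - 1 / (N : ℝ)) :
    aN = (K ^ 2 + K) / (ρ * W (K * Real.exp K / N)) - (K + 1) / ρ := by
  have hN' : (0:ℝ) < N := by exact_mod_cast hN
  set x := K * Real.exp K / N with hx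
  have hxpos : 0 < x := by positivity
  have hw := hW x hxpos.le
  have hwpos : 0 < W x := by
    rcases (hWnonneg x hxpos.le).lt_or_eq with h | h
    · exact h
    · exfalso
      rw [← h, zero_mul] at hw
      linarith
  have hA : (1 + K) / (aN * ρ + K + 1) *
      Real.exp (-K + K * (1 + K) / (ρ * aN + K + 1)) = 1 / N := by linarith
  set D := aN * ρ + K + 1 with hD
  have hD2 : ρ * aN + K + 1 = D := by rw [hD]; ring
  rw [hD2] at hA
  have hNinv : (0:ℝ) < 1 / N := by positivity
  have hDne : D ≠ 0 := by
    intro h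
    rw [h, div_zero, zero_mul] at hA
    linarith
  have hDpos : 0 < D := by
    rcases hDne.lt_or_gt with h | h
    · exfalso
      have hneg : (1 + K) / D < 0 := div_neg_of_pos_of_neg (by linarith) h
      have := mul_neg_of_neg_of_pos hneg (Real.exp_pos (-K + K * (1 + K) / D))
      linarith
    · exact h
  set u := K * (1 + K) / D with hu
  have hupos : 0 < u := by positivity
  have hexp : Real.exp (-K + u) = Real.exp u / Real.exp K := by
    rw [Real.exp_add, Real.exp_neg]
    field_simp
  have hueq : u * Real.exp u = x := by
    have h1 : (1 + K) / D * (Real.exp u / Real.exp K) = 1 / N := by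
      rw [← hexp]
      exact hA
    have hEK := Real.exp_pos K
    have h2 : (1 + K) * Real.exp u * N = D * Real.exp K := by
      field_simp at h1
      linarith
    rw [hx, eq_div_iff (ne_of_gt hN')]
    calc u * Real.exp u * N = K * ((1 + K) * Real.exp u * N) / D := by
          rw [hu]; field_simp
      _ = K * (D * Real.exp K) / D := by rw [h2]
      _ = K * Real.exp K := by field_simp
  have huW : u = W x := texp_inj hupos hwpos (by rw [hueq, hw])
  have hDval : D = K * (1 + K) / W x := by
    rw [← huW, hu]
    field_simp
  have : aN * ρ + K + 1 = K * (1 + K) / W x := by rw [← hDval]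
  have hwne : W x ≠ 0 := ne_of_gt hwpos
  field_simp at this ⊢
  nlinarith [this]
end
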